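/- Let P, K be positive integers, let v_1, …, v_K ∈ ℂ^P, let a ∈ ℝ^K be such that C = Σ_{k=1}^K a_k v_k v_k^H is Hermitian positive definite, and let S = C + Δ where Δ is Hermitian with ‖Δ‖_F ≤ ε. Let â ∈ ℝ^K be such that Ĉ = Σ_{k=1}^K â_k v_k v_k^H satisfies μ I ⪯ Ĉ ⪯ λ I for some 0 < μ ≤ λ, and suppose â is a stationary point of the negative log-likelihood, i.e. v_k^H Ĉ^{-1} (Ĉ − S) Ĉ^{-1} v_k = 0 for every k = 1, …, K. Then ‖Ĉ − C‖_F² ≤ (λ²/μ²)·ε². -/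

import Mathlib

open Matrix
open scoped ComplexOrder

/-- The rank-one Hermitian matrix `v vᴴ` formed from a vector `v ∈ ℂ^P`. -/
noncomputable def outer {P : ℕ} (v : Fin P → ℂ) : Matrix (Fin P) (Fin P) ℂ :=
  Matrix.of fun p q => v p * star (v q)

/-- The Frobenius norm `‖X‖_F = (Σ_{p,q} |X_{pq}|²)^{1/2}`. -/
noncomputable def frobNorm {P : ℕ} (X : Matrix (Fin P) (Fin P) ℂ) : ℝ :=
  Real.sqrt (∑ p, ∑ q, ‖X p q‖ ^ 2)

/-- Real Frobenius inner product of two complex matrices. -/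
noncomputable def T {P : ℕ} (X Y : Matrix (Fin P) (Fin P) ℂ) : ℝ := ((Xᴴ * Y).trace).re

lemma T_self {P : ℕ} (X : Matrix (Fin P) (Fin P) ℂ) :
    T X X = ∑ p, ∑ q, ‖X p q‖ ^ 2 := by
  simp only [T, Matrix.trace, Matrix.diag, Matrix.mul_apply, Matrix.conjTranspose_apply,
    Complex.re_sum]
  rw [Finset.sum_comm]
  refine Finset.sum_congr rfl fun p _ => Finset.sum_congr rfl fun q _ => ?_
  simp [Complex.mul_re, Complex.sq_norm, Complex.normSq_apply]

lemma T_self_nonneg {P : ℕ} (X : Matrix (Fin P) (Fin P) ℂ) : 0 ≤ T X X := by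
  rw [T_self]; positivity

lemma frob_sq {P : ℕ} (X : Matrix (Fin P) (Fin P) ℂ) : frobNorm X ^ 2 = T X X := by
  rw [frobNorm, Real.sq_sqrt (by positivity), T_self]

lemma T_symm {P : ℕ} (X Y : Matrix (Fin P) (Fin P) ℂ) : T X Y = T Y X := by
  unfold T
  rw [show Yᴴ * X = (Xᴴ * Y)ᴴ by simp [Matrix.conjTranspose_mul],
    Matrix.trace_conjTranspose]
  simp

lemma psd_diag_re_nonneg {P : ℕ} {M : Matrix (Fin P) (Fin P) ℂ} (hM : M.PosSemidef)
    (q : Fin P) : 0 ≤ (M q q).re := by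
  have h := hM.re_dotProduct_nonneg (Pi.single q 1)
  simpa [dotProduct, Matrix.mulVec, Pi.single_apply, Finset.sum_ite_eq,
    Finset.mul_sum, apply_ite] using h

lemma psd_trace_re_nonneg {P : ℕ} {M : Matrix (Fin P) (Fin P) ℂ} (hM : M.PosSemidef) :
    0 ≤ (M.trace).re := by
  rw [Matrix.trace]
  simp only [Complex.re_sum]
  exact Finset.sum_nonneg fun q _ => psd_diag_re_nonneg hM q

open scoped MatrixOrder in
lemma trace_mul_psd_nonneg {P : ℕ} {A B : Matrix (Fin P) (Fin P) ℂ}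
    (hA : A.PosSemidef) (hB : B.PosSemidef) : 0 ≤ ((A * B).trace).re := by
  have h1 : A * B = CFC.sqrt A * (CFC.sqrt A * B) := by
    rw [← Matrix.mul_assoc, CFC.sqrt_mul_sqrt_self A hA.nonneg]
  rw [h1, Matrix.trace_mul_comm]
  have h2 : (CFC.sqrt A * B * CFC.sqrt A).PosSemidef := by
    have := hB.mul_mul_conjTranspose_same (CFC.sqrt A)
    rwa [(CFC.sqrt_nonneg A).posSemidef.1] at this
  exact psd_trace_re_nonneg h2

lemma smul_psd {P : ℕ} {M : Matrix (Fin P) (Fin P) ℂ} (c : ℝ) (hc : 0 ≤ c)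
    (hM : M.PosSemidef) : ((c : ℂ) • M).PosSemidef := by
  constructor
  · have := hM.1
    unfold Matrix.IsHermitian at *
    rw [Matrix.conjTranspose_smul, this]
    congr 1
    simp [Complex.star_def]
  · intro x
    exact (hM.smul (a := (c:ℂ)) (Complex.zero_le_real.2 hc)).2 x

lemma trace_mul_le {P : ℕ} {M N : Matrix (Fin P) (Fin P) ℂ} {c : ℝ}
    (hM : M.PosSemidef) (hc : ((c : ℂ) • 1 - N).PosSemidef) :
    ((M * N).trace).re ≤ c * (M.trace).re := by
  have h := trace_mul_psd_nonneg hM hc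
  have e : (M * ((c : ℂ) • 1 - N)).trace = (c : ℂ) * M.trace - (M * N).trace := by
    rw [Matrix.mul_sub, Matrix.trace_sub, mul_smul_comm, Matrix.mul_one, Matrix.trace_smul]
    simp [smul_eq_mul]
  rw [e] at h
  have : ((c : ℂ) * M.trace - (M * N).trace).re = c * (M.trace).re - ((M * N).trace).re := by
    simp [Complex.sub_re, Complex.mul_re, Complex.ofReal_re, Complex.ofReal_im]
  rw [this] at h
  linarith

lemma sandwich {P : ℕ} {R : Matrix (Fin P) (Fin P) ℂ} (X : Matrix (Fin P) (Fin P) ℂ)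
    {c : ℝ} (hR : R.IsHermitian) (hc : 0 ≤ c)
    (hle : ((c : ℂ) • 1 - R * R).PosSemidef) :
    T (R * X * R) (R * X * R) ≤ c ^ 2 * T X X := by
  have hRR : Rᴴ = R := hR
  have hBpsd : (R * R).PosSemidef := by
    have := Matrix.posSemidef_conjTranspose_mul_self R
    rwa [hRR] at this
  have e1 : ((R * X * R)ᴴ * (R * X * R)).trace = ((Xᴴ * (R * R) * X) * (R * R)).trace := by
    rw [Matrix.conjTranspose_mul, Matrix.conjTranspose_mul, hRR]
    rw [show R * (Xᴴ * R) * (R * X * R) = R * (Xᴴ * (R * (R * (X * R)))) from by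
      simp only [Matrix.mul_assoc]]
    rw [Matrix.trace_mul_comm]
    congr 1
    simp only [Matrix.mul_assoc]
  have hXBX : (Xᴴ * (R * R) * X).PosSemidef := hBpsd.conjTranspose_mul_mul_same X
  have step1 : ((Xᴴ * (R * R) * X) * (R * R)).trace.re ≤ c * (Xᴴ * (R * R) * X).trace.re :=
    trace_mul_le hXBX hle
  have e2 : (Xᴴ * (R * R) * X).trace = ((X * Xᴴ) * (R * R)).trace :=
    Matrix.trace_mul_cycle Xᴴ (R * R) X
  have hXX : (X * Xᴴ).PosSemidef := Matrix.posSemidef_self_mul_conjTranspose X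
  have step2 : ((X * Xᴴ) * (R * R)).trace.re ≤ c * (X * Xᴴ).trace.re :=
    trace_mul_le hXX hle
  have e3 : (X * Xᴴ).trace = (Xᴴ * X).trace := Matrix.trace_mul_comm X Xᴴ
  have : T (R * X * R) (R * X * R) ≤ c * (c * T X X) := by
    unfold T
    rw [e1]
    refine step1.trans ?_
    rw [e2]
    refine mul_le_mul_of_nonneg_left ?_ hc
    rw [← e3]
    exact step2.trans (by rw [e3])
  calc T (R * X * R) (R * X * R) ≤ c * (c * T X X) := this
    _ = c ^ 2 * T X X := by ring

lemma trace_mul_outer {P : ℕ} (M : Matrix (Fin P) (Fin P) ℂ) (v : Fin P → ℂ) :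
    (M * outer v).trace = star v ⬝ᵥ (M *ᵥ v) := by
  simp only [Matrix.trace, Matrix.diag, Matrix.mul_apply, outer, Matrix.of_apply,
    dotProduct, Matrix.mulVec, Pi.star_apply]
  refine Finset.sum_congr rfl fun p _ => ?_
  rw [Finset.mul_sum]
  refine Finset.sum_congr rfl fun q _ => ?_
  ring

/-- Stability of stationary points of the NLL under a perturbed
sample covariance `S = C + Δ` with `‖Δ‖_F ≤ ε` and `μ I ⪯ Ĉ ⪯ λ I`. -/
theorem stmt_1 (P K : ℕ) (hP : 0 < P) (hK : 0 < K)
    (v : Fin K → Fin P → ℂ) (a : Fin K → ℝ)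
    (C : Matrix (Fin P) (Fin P) ℂ)
    (hCdef : C = ∑ k, (a k : ℂ) • outer (v k))
    (hCpd : C.PosDef)
    (Δ : Matrix (Fin P) (Fin P) ℂ) (hΔherm : Δ.IsHermitian)
    (ε : ℝ) (hΔ : frobNorm Δ ≤ ε)
    (S : Matrix (Fin P) (Fin P) ℂ) (hSdef : S = C + Δ)
    (ahat : Fin K → ℝ)
    (Chat : Matrix (Fin P) (Fin P) ℂ)
    (hChatdef : Chat = ∑ k, (ahat k : ℂ) • outer (v k))
    (μ lam : ℝ) (hμ : 0 < μ) (hμlam : μ ≤ lam)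
    (hlow : (Chat - (μ : ℂ) • (1 : Matrix (Fin P) (Fin P) ℂ)).PosSemidef)
    (hhigh : ((lam : ℂ) • (1 : Matrix (Fin P) (Fin P) ℂ) - Chat).PosSemidef)
    (hstat : ∀ k, star (v k) ⬝ᵥ ((Chat⁻¹ * (Chat - S) * Chat⁻¹) *ᵥ v k) = 0) :
    frobNorm (Chat - C) ^ 2 ≤ (lam ^ 2 / μ ^ 2) * ε ^ 2 := by
  -- Hermitian and positive-definiteness facts about Chat
  have hμ1pd : ((μ : ℂ) • (1 : Matrix (Fin P) (Fin P) ℂ)).PosDef := by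
    rw [show ((μ : ℂ) • (1 : Matrix (Fin P) (Fin P) ℂ)) = Matrix.diagonal (fun _ => (μ:ℂ)) from by
      rw [Matrix.smul_one_eq_diagonal]]
    exact Matrix.posDef_diagonal_iff.2 fun _ => by exact_mod_cast Complex.zero_lt_real.2 hμ
  have hChatpd : Chat.PosDef := by
    have := hμ1pd.add_posSemidef hlow
    rwa [add_sub_cancel] at this
  have hChatH : Chatᴴ = Chat := hChatpd.1
  have hdet : IsUnit Chat.det := hChatpd.det_pos.ne'.isUnit
  obtain ⟨Bm, hBmdef⟩ : ∃ B, B = Chat⁻¹ := ⟨_, rfl⟩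
  have hBpd : Bm.PosDef := hBmdef ▸ hChatpd.inv
  have hChatinv : Bm⁻¹ = Chat := by
    rw [hBmdef]; exact Matrix.nonsing_inv_nonsing_inv Chat hdet
  open scoped MatrixOrder in obtain ⟨Rm, hRmdef⟩ : ∃ R, R = CFC.sqrt Bm := ⟨_, rfl⟩
  have hRps : Rm.PosSemidef := by
    rw [hRmdef]; open scoped MatrixOrder in exact (CFC.sqrt_nonneg Bm).posSemidef
  have hRH : Rmᴴ = Rm := hRps.1
  have hRR : Rm * Rm = Bm := by
    rw [hRmdef]; open scoped MatrixOrder in exact CFC.sqrt_mul_sqrt_self Bm hBpd.posSemidef.nonneg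
  have hRdet : IsUnit Rm.det := by
    have h1 : Rm.det * Rm.det = Bm.det := by rw [← Matrix.det_mul, hRR]
    have h2 : Bm.det ≠ 0 := hBpd.det_pos.ne'
    have h3 : Rm.det ≠ 0 := fun h => h2 (by rw [← h1, h, mul_zero])
    exact h3.isUnit
  have hRinv : Rm⁻¹ * Rm = 1 := Matrix.nonsing_inv_mul Rm hRdet
  have hRinv' : Rm * Rm⁻¹ = 1 := Matrix.mul_nonsing_inv Rm hRdet
  obtain ⟨E, hEdef⟩ : ∃ E, E = Chat - C := ⟨_, rfl⟩
  have hEH : Eᴴ = E := by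
    rw [hEdef, Matrix.conjTranspose_sub, hChatH, hCpd.1]
  have hΔH : Δᴴ = Δ := hΔherm
  -- stationarity gives the trace identity
  have hEsum : E = ∑ k, ((ahat k : ℂ) - (a k : ℂ)) • outer (v k) := by
    rw [hEdef, hChatdef, hCdef, ← Finset.sum_sub_distrib]
    exact Finset.sum_congr rfl fun k _ => (sub_smul _ _ _).symm
  have htr0 : ((Bm * (Chat - S) * Bm) * E).trace = 0 := by
    conv_lhs => rw [hEsum]
    rw [Matrix.mul_sum, Matrix.trace_sum]
    refine Finset.sum_eq_zero fun k _ => ?_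
    rw [mul_smul_comm, Matrix.trace_smul, trace_mul_outer, hBmdef, hstat k, smul_zero]
  have hChatS : Chat - S = E - Δ := by rw [hSdef, hEdef]; abel
  have htr1 : (Bm * E * Bm * E).trace = (Bm * Δ * Bm * E).trace := by
    rw [hChatS] at htr0
    have hsplit : Bm * (E - Δ) * Bm * E = Bm * E * Bm * E - Bm * Δ * Bm * E := by
      rw [Matrix.mul_sub, Matrix.sub_mul, Matrix.sub_mul]
    rw [hsplit, Matrix.trace_sub, sub_eq_zero] at htr0
    exact htr0
  -- F and G
  obtain ⟨F, hFdef⟩ : ∃ F, F = Rm * E * Rm := ⟨_, rfl⟩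
  obtain ⟨G, hGdef⟩ : ∃ G, G = Rm * Δ * Rm := ⟨_, rfl⟩
  have hFH : Fᴴ = F := by
    rw [hFdef, Matrix.conjTranspose_mul, Matrix.conjTranspose_mul, hRH, hEH]
    simp only [Matrix.mul_assoc]
  have hGH : Gᴴ = G := by
    rw [hGdef, Matrix.conjTranspose_mul, Matrix.conjTranspose_mul, hRH, hΔH]
    simp only [Matrix.mul_assoc]
  have hFF : (F * F).trace = (Bm * E * Bm * E).trace := by
    have h1 : F * F = Rm * E * Bm * E * Rm := by
      rw [hFdef, ← hRR]; simp only [Matrix.mul_assoc]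
    rw [h1, Matrix.trace_mul_comm, ← hRR]
    simp only [Matrix.mul_assoc]
  have hGF : (G * F).trace = (Bm * Δ * Bm * E).trace := by
    have h1 : G * F = Rm * Δ * Bm * E * Rm := by
      rw [hGdef, hFdef, ← hRR]; simp only [Matrix.mul_assoc]
    rw [h1, Matrix.trace_mul_comm, ← hRR]
    simp only [Matrix.mul_assoc]
  have hTFG : T F F = T G F := by
    unfold T
    rw [hFH, hGH, hFF, hGF, htr1]
  -- Cauchy–Schwarz-free comparison: T F F ≤ T G G
  have hFG : T F F ≤ T G G := by
    have h0 : 0 ≤ T (F - G) (F - G) := T_self_nonneg _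
    have hexp : T (F - G) (F - G) = T F F - T F G - T G F + T G G := by
      unfold T
      rw [Matrix.conjTranspose_sub, Matrix.sub_mul, Matrix.mul_sub, Matrix.mul_sub,
        Matrix.trace_sub, Matrix.trace_sub, Matrix.trace_sub]
      simp [Complex.sub_re, Complex.add_re]
      ring
    have hsymm : T F G = T G F := T_symm F G
    rw [hexp, hsymm, ← hTFG] at h0
    linarith
  -- bound on G via μ
  have hRCR : Rm * Chat * Rm = 1 := by
    rw [← hChatinv, ← hRR, Matrix.mul_inv_rev]
    calc Rm * (Rm⁻¹ * Rm⁻¹) * Rm = (Rm * Rm⁻¹) * (Rm⁻¹ * Rm) := by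
          simp only [Matrix.mul_assoc]
      _ = 1 := by rw [hRinv', hRinv, Matrix.mul_one]
  have hBle : (((μ⁻¹ : ℝ) : ℂ) • 1 - Rm * Rm).PosSemidef := by
    have hpsd1 : (Rm * (Chat - (μ : ℂ) • 1) * Rm).PosSemidef := by
      have := hlow.mul_mul_conjTranspose_same Rm
      rwa [hRH] at this
    have hsm := smul_psd μ⁻¹ (inv_pos.2 hμ).le hpsd1
    have h2 : Rm * (Chat - (μ : ℂ) • 1) * Rm = 1 - (μ : ℂ) • (Rm * Rm) := by
      rw [Matrix.mul_sub, Matrix.sub_mul, hRCR]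
      congr 1
      rw [mul_smul_comm, Matrix.mul_one, smul_mul_assoc]
    have heq : ((μ⁻¹ : ℝ) : ℂ) • (Rm * (Chat - (μ : ℂ) • 1) * Rm)
        = ((μ⁻¹ : ℝ) : ℂ) • 1 - Rm * Rm := by
      rw [h2, smul_sub, smul_smul, ← Complex.ofReal_mul, inv_mul_cancel₀ hμ.ne',
        Complex.ofReal_one, one_smul]
    rwa [heq] at hsm
  have hG : T G G ≤ (μ⁻¹) ^ 2 * T Δ Δ := by
    have := sandwich Δ hRps.isHermitian (inv_pos.2 hμ).le hBle
    rwa [← hGdef] at this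
  -- bound on E via lam
  have hRiH : Rm⁻¹.IsHermitian := by
    unfold Matrix.IsHermitian
    rw [Matrix.conjTranspose_nonsing_inv, hRH]
  have hRi2 : Rm⁻¹ * Rm⁻¹ = Chat := by
    rw [← Matrix.mul_inv_rev, hRR]
    exact hChatinv
  have hhigh' : ((lam : ℂ) • 1 - Rm⁻¹ * Rm⁻¹).PosSemidef := by
    rw [hRi2]; exact hhigh
  have hEeq : Rm⁻¹ * F * Rm⁻¹ = E := by
    rw [hFdef]
    calc Rm⁻¹ * (Rm * E * Rm) * Rm⁻¹ = (Rm⁻¹ * Rm) * (E * (Rm * Rm⁻¹)) := by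
          simp only [Matrix.mul_assoc]
      _ = E := by rw [hRinv, hRinv', Matrix.one_mul, Matrix.mul_one]
  have hlam0 : (0 : ℝ) ≤ lam := le_trans hμ.le hμlam
  have hEbound : T E E ≤ lam ^ 2 * T F F := by
    have := sandwich F hRiH hlam0 hhigh'
    rwa [hEeq] at this
  have hTΔ : T Δ Δ ≤ ε ^ 2 := by
    rw [← frob_sq]
    have h0 : 0 ≤ frobNorm Δ := Real.sqrt_nonneg _
    nlinarith
  have hfinal : T E E ≤ lam ^ 2 * (μ⁻¹ ^ 2 * ε ^ 2) :=
    calc T E E ≤ lam ^ 2 * T F F := hEbound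
      _ ≤ lam ^ 2 * T G G := mul_le_mul_of_nonneg_left hFG (sq_nonneg lam)
      _ ≤ lam ^ 2 * (μ⁻¹ ^ 2 * T Δ Δ) := mul_le_mul_of_nonneg_left hG (sq_nonneg lam)
      _ ≤ lam ^ 2 * (μ⁻¹ ^ 2 * ε ^ 2) :=
          mul_le_mul_of_nonneg_left
            (mul_le_mul_of_nonneg_left hTΔ (sq_nonneg μ⁻¹)) (sq_nonneg lam)
  rw [← hEdef, frob_sq]
  have heq2 : lam ^ 2 / μ ^ 2 * ε ^ 2 = lam ^ 2 * (μ⁻¹ ^ 2 * ε ^ 2) := by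
    rw [div_eq_mul_inv, inv_pow]; ring
  rw [heq2]
  exact hfinal
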